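/- Define polynomials G_s ∈ ℤ[t] by G_0(t) = 1 − 2t and G_{s+1}(t) = G_s(t)² − 2·t^{2^{s+1}} (so G_s(t) = t^{2^s}·F^{∘s}(1/t − 2), where F(y) = y² − 2 and F^{∘s} is the s-fold iterate). Then for every s ≥ 0, in the ring of formal power series ℤ⟦t⟧, the generating function X_{2^s}(t) = ∑_{k≥0} (x (2^s) k)·t^k satisfies X_{2^s}(t)·G_s(t) = t^{2^s}. -/

import Mathlib

/-- `xfun n k` is the multiplicity of the indecomposable tilting module `T(2n)` in
`V^{⊗2k}`, where `V` is the natural representation of `SL₂` in characteristic 2. -/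
def xfun : ℕ → ℕ → ℕ
  | 0, 0 => 1
  | 0, _ + 1 => 0
  | _ + 1, 0 => 0
  | n + 1, k + 1 =>
      xfun n k + 2 * ∑ i ∈ Finset.range ((n + 1).factorization 2 + 1), xfun (n + 2 ^ i) k

/-- `G s` is the polynomial `t^{2^s}·F^{∘s}(1/t − 2)` where `F(y) = y² − 2`. -/
noncomputable def G : ℕ → Polynomial ℤ
  | 0 => 1 - 2 * Polynomial.X
  | s + 1 => G s ^ 2 - 2 * Polynomial.X ^ 2 ^ (s + 1)

/-- product of G over [a, b) -/
noncomputable def Qseg (a b : ℕ) : Polynomial ℤ := ∏ j ∈ Finset.Ico a b, G j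

lemma Qseg_mul (a b c : ℕ) (h1 : a ≤ b) (h2 : b ≤ c) :
    Qseg a b * Qseg b c = Qseg a c := Finset.prod_Ico_consecutive _ h1 h2

lemma Qseg_self (a : ℕ) : Qseg a a = 1 := by simp [Qseg]

lemma Qseg_succ_top (a b : ℕ) (h : a ≤ b) : Qseg a (b + 1) = Qseg a b * G b := by
  exact Finset.prod_Ico_succ_top h G

/-- The key polynomial identity. -/
lemma star (r : ℕ) :
    Qseg 0 r = G r + 2 * (∑ i ∈ Finset.range r, Polynomial.X ^ (2 ^ i) * Qseg i r)
      + 2 * Polynomial.X ^ (2 ^ r) := by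
  induction r with
  | zero =>
      show (1 : Polynomial ℤ) = (1 - 2 * Polynomial.X) + 2 * 0 + 2 * Polynomial.X ^ 1
      ring
  | succ r ih =>
      rw [Qseg_succ_top 0 r (by omega), Finset.sum_range_succ,
        Qseg_succ_top r r le_rfl, Qseg_self,
        show G (r + 1) = G r ^ 2 - 2 * Polynomial.X ^ 2 ^ (r + 1) from rfl]
      have h : ∀ i ∈ Finset.range r, Polynomial.X ^ (2 ^ i) * Qseg i (r + 1)
          = (Polynomial.X ^ (2 ^ i) * Qseg i r) * G r := by
        intro i hi
        rw [Qseg_succ_top i r (by simp at hi; omega)]; ring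
      rw [Finset.sum_congr rfl h, ← Finset.sum_mul, ih, pow_succ]
      ring

/-- shifted product of G over the binary digits of n -/
noncomputable def P (s n : ℕ) : Polynomial ℤ :=
  if h : n = 0 then 1 else (if n % 2 = 1 then G s else 1) * P (s + 1) (n / 2)
termination_by n
decreasing_by exact Nat.div_lt_self (Nat.pos_of_ne_zero h) one_lt_two

lemma P_zero (s : ℕ) : P s 0 = 1 := by rw [P]; simp

lemma P_even (s m : ℕ) : P s (2 * m) = P (s + 1) m := by
  rcases Nat.eq_zero_or_pos m with h | h
  · simp [h, P_zero]
  · rw [P, dif_neg (by omega : ¬ 2 * m = 0), if_neg (by omega : ¬ 2 * m % 2 = 1),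
      Nat.mul_div_cancel_left _ (by norm_num : 0 < 2), one_mul]

lemma P_odd (s m : ℕ) : P s (2 * m + 1) = G s * P (s + 1) m := by
  rw [P, dif_neg (by omega : ¬ 2 * m + 1 = 0), if_pos (by omega : (2 * m + 1) % 2 = 1),
    show (2 * m + 1) / 2 = m by omega]

/-- shifted prefix product -/
noncomputable def Q' (s r : ℕ) : Polynomial ℤ := ∏ j ∈ Finset.range r, G (s + j)

lemma Q'_zero (s : ℕ) : Q' s 0 = 1 := by simp [Q']

lemma Q'_succ (s r : ℕ) : Q' s (r + 1) = G s * Q' (s + 1) r := by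
  rw [Q', Finset.prod_range_succ', Q', mul_comm]
  congr 1
  · exact Finset.prod_congr rfl fun j _ => by rw [show s + (j + 1) = s + 1 + j by omega]

lemma Q'_eq_Qseg (r : ℕ) : Q' 0 r = Qseg 0 r := by
  rw [Q', Qseg, Finset.range_eq_Ico]
  exact Finset.prod_congr rfl (fun j _ => by rw [Nat.zero_add])

/-- Lemma A -/
lemma P_A : ∀ r s q, P s (2 ^ (r + 1) * q + 2 ^ r) = G (s + r) * P (s + r + 1) q := by
  intro r
  induction r with
  | zero => intro s q; simpa [pow_succ, pow_zero, mul_comm] using P_odd s q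
  | succ r ih =>
      intro s q
      have h : 2 ^ (r + 2) * q + 2 ^ (r + 1) = 2 * (2 ^ (r + 1) * q + 2 ^ r) := by ring
      rw [h, P_even, ih, show s + 1 + r = s + (r + 1) by omega]

/-- Lemma B -/
lemma P_B : ∀ r s q, P s (2 ^ (r + 1) * q + 2 ^ r - 1) = Q' s r * P (s + r + 1) q := by
  intro r
  induction r with
  | zero =>
      intro s q
      have h : 2 ^ 1 * q + 2 ^ 0 - 1 = 2 * q := by omega
      rw [h, P_even, Q'_zero, one_mul]
  | succ r ih =>
      intro s q
      have h2 : (0:ℕ) < 2 ^ r := Nat.pow_pos (by norm_num)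
      have h : 2 ^ (r + 2) * q + 2 ^ (r + 1) - 1 = 2 * (2 ^ (r + 1) * q + 2 ^ r - 1) + 1 := by
        have e : 2 ^ (r + 2) * q = 2 * (2 ^ (r + 1) * q) := by ring
        have e2 : 2 ^ (r + 1) = 2 * 2 ^ r := by ring
        omega
      rw [h, P_odd, ih, Q'_succ, mul_assoc, show s + 1 + r + 1 = s + (r + 1) + 1 by omega]

/-- Lemma C -/
lemma P_C : ∀ i d s q, P s (2 ^ (i + d + 1) * q + 2 ^ (i + d) + 2 ^ i - 1)
    = Q' s i * (G (s + i + d) * P (s + i + d + 1) q) := by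
  intro i
  induction i with
  | zero =>
      intro d s q
      have h : 2 ^ (0 + d + 1) * q + 2 ^ (0 + d) + 2 ^ 0 - 1 = 2 ^ (d + 1) * q + 2 ^ d := by
        have h4 : (0:ℕ) < 2 ^ d := Nat.pow_pos (by norm_num)
        rw [Nat.zero_add, pow_zero]; omega
      rw [h, P_A, Q'_zero, one_mul, show s + 0 + d = s + d by omega]
  | succ i ih =>
      intro d s q
      have h2 : (0:ℕ) < 2 ^ i := Nat.pow_pos (by norm_num)
      have h : 2 ^ (i + 1 + d + 1) * q + 2 ^ (i + 1 + d) + 2 ^ (i + 1) - 1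
          = 2 * (2 ^ (i + d + 1) * q + 2 ^ (i + d) + 2 ^ i - 1) + 1 := by
        have e1 : 2 ^ (i + 1 + d + 1) * q = 2 * (2 ^ (i + d + 1) * q) := by ring
        have e2 : 2 ^ (i + 1 + d) = 2 * 2 ^ (i + d) := by ring
        have e3 : 2 ^ (i + 1) = 2 * 2 ^ i := by ring
        have h4 : (0:ℕ) < 2 ^ (i + d) := Nat.pow_pos (by norm_num)
        omega
      rw [h, P_odd, ih, Q'_succ, mul_assoc, show s + 1 + i + d = s + (i + 1) + d by omega]

lemma G_eval (s : ℕ) : (G s).eval 0 = 1 := by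
  induction s with
  | zero => simp [G]
  | succ s ih =>
      rw [show G (s + 1) = G s ^ 2 - 2 * Polynomial.X ^ 2 ^ (s + 1) from rfl]
      simp [ih, zero_pow (by positivity : (2:ℕ) ^ (s + 1) ≠ 0)]

lemma Qseg_eval (a b : ℕ) : (Qseg a b).eval 0 = 1 := by
  simp [Qseg, Polynomial.eval_prod, G_eval]

lemma P_eval : ∀ n s, (P s n).eval 0 = 1 := by
  intro n
  induction n using Nat.strong_induction_on with
  | _ n ih =>
      intro s
      rcases Nat.eq_zero_or_pos n with h | h
      · simp [h, P_zero]
      · rw [P, dif_neg (by omega : ¬ n = 0), Polynomial.eval_mul,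
          ih (n / 2) (Nat.div_lt_self h one_lt_two)]
        rcases Nat.even_or_odd n with he | ho
        · rw [if_neg (by rw [Nat.even_iff] at he; omega : ¬ n % 2 = 1)]; simp
        · rw [if_pos (Nat.odd_iff.mp ho)]; simp [G_eval]

lemma coe_ne_zero {p : Polynomial ℤ} (h : p.eval 0 = 1) : (p : PowerSeries ℤ) ≠ 0 := by
  intro h0
  have h1 : PowerSeries.coeff 0 (p : PowerSeries ℤ) = 1 := by
    rw [Polynomial.coeff_coe, Polynomial.coeff_zero_eq_eval_zero, h]
  rw [h0] at h1
  simp at h1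

lemma constCoeff_coe {p : Polynomial ℤ} (h : p.eval 0 = 1) :
    PowerSeries.constantCoeff (p : PowerSeries ℤ) = 1 := by
  rw [← PowerSeries.coeff_zero_eq_constantCoeff_apply, Polynomial.coeff_coe,
    Polynomial.coeff_zero_eq_eval_zero, h]

noncomputable def Zf (n : ℕ) : PowerSeries ℤ :=
  PowerSeries.X ^ n * PowerSeries.invOfUnit ((P 0 n : Polynomial ℤ) : PowerSeries ℤ) 1

lemma Pinv (n : ℕ) :
    ((P 0 n : Polynomial ℤ) : PowerSeries ℤ)
      * PowerSeries.invOfUnit ((P 0 n : Polynomial ℤ) : PowerSeries ℤ) 1 = 1 :=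
  PowerSeries.mul_invOfUnit _ _ (by rw [constCoeff_coe (P_eval n 0)]; rfl)

lemma Zf_mul_cast (m : ℕ) (C : Polynomial ℤ) :
    Zf m * ((P 0 m * C : Polynomial ℤ) : PowerSeries ℤ)
      = PowerSeries.X ^ m * (C : PowerSeries ℤ) := by
  rw [Zf, Polynomial.coe_mul]
  calc PowerSeries.X ^ m * PowerSeries.invOfUnit ((P 0 m : Polynomial ℤ) : PowerSeries ℤ) 1
        * (((P 0 m : Polynomial ℤ) : PowerSeries ℤ) * (C : PowerSeries ℤ))
      = PowerSeries.X ^ m * (C : PowerSeries ℤ)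
        * (((P 0 m : Polynomial ℤ) : PowerSeries ℤ)
           * PowerSeries.invOfUnit ((P 0 m : Polynomial ℤ) : PowerSeries ℤ) 1) := by ring
    _ = PowerSeries.X ^ m * (C : PowerSeries ℤ) := by rw [Pinv, mul_one]

lemma Zf_rec (r q : ℕ) :
    Zf (2 ^ (r + 1) * q + 2 ^ r) = PowerSeries.X * (Zf (2 ^ (r + 1) * q + 2 ^ r - 1)
      + 2 * ∑ i ∈ Finset.range (r + 1), Zf (2 ^ (r + 1) * q + 2 ^ r - 1 + 2 ^ i)) := by
  have hr : (0:ℕ) < 2 ^ r := Nat.pow_pos (by norm_num)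
  set n := 2 ^ (r + 1) * q + 2 ^ r with hn
  have hn1 : 1 ≤ n := by omega
  set Upoly : Polynomial ℤ := Qseg 0 r * (G r * P (r + 1) q) with hU
  have hUeval : Upoly.eval 0 = 1 := by
    rw [hU]; simp [Qseg_eval, G_eval, P_eval]
  have hUne : ((Upoly : Polynomial ℤ) : PowerSeries ℤ) ≠ 0 := coe_ne_zero hUeval
  apply mul_right_cancel₀ hUne
  -- LHS computation
  have hPn : P 0 n = G r * P (r + 1) q := by
    simpa using P_A r 0 q
  have hL : Zf n * ((Upoly : Polynomial ℤ) : PowerSeries ℤ)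
      = PowerSeries.X ^ n * ((Qseg 0 r : Polynomial ℤ) : PowerSeries ℤ) := by
    rw [show Upoly = P 0 n * Qseg 0 r by rw [hU, hPn]; ring, Zf_mul_cast]
  -- n - 1 term
  have hPn1 : P 0 (n - 1) = Qseg 0 r * P (r + 1) q := by
    have h := P_B r 0 q
    rw [Q'_eq_Qseg] at h
    simpa using h
  have hL1 : Zf (n - 1) * ((Upoly : Polynomial ℤ) : PowerSeries ℤ)
      = PowerSeries.X ^ (n - 1) * ((G r : Polynomial ℤ) : PowerSeries ℤ) := by
    rw [show Upoly = P 0 (n - 1) * G r by rw [hU, hPn1]; ring, Zf_mul_cast]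
  -- the summand terms
  have hterm : ∀ i ∈ Finset.range (r + 1),
      Zf (n - 1 + 2 ^ i) * ((Upoly : Polynomial ℤ) : PowerSeries ℤ)
        = PowerSeries.X ^ (n - 1 + 2 ^ i) * ((Qseg i r : Polynomial ℤ) : PowerSeries ℤ) := by
    intro i hi
    have hir : i ≤ r := by have := Finset.mem_range.mp hi; omega
    have hi2 : (0:ℕ) < 2 ^ i := Nat.pow_pos (by norm_num)
    have harg : n - 1 + 2 ^ i = 2 ^ (i + (r - i) + 1) * q + 2 ^ (i + (r - i)) + 2 ^ i - 1 := by
      rw [show i + (r - i) = r by omega]; omega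
    have hPm : P 0 (n - 1 + 2 ^ i) = Qseg 0 i * (G r * P (r + 1) q) := by
      rw [harg, P_C i (r - i) 0 q, Q'_eq_Qseg]
      rw [show 0 + i + (r - i) = r by omega]
    have hfac : Upoly = P 0 (n - 1 + 2 ^ i) * Qseg i r := by
      rw [hU, hPm, ← Qseg_mul 0 i r (by omega) hir]; ring
    rw [hfac, Zf_mul_cast]
  -- assemble
  rw [hL]
  have hdist : (PowerSeries.X * (Zf (n - 1)
        + 2 * ∑ i ∈ Finset.range (r + 1), Zf (n - 1 + 2 ^ i)))
        * ((Upoly : Polynomial ℤ) : PowerSeries ℤ)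
      = PowerSeries.X * (Zf (n - 1) * ((Upoly : Polynomial ℤ) : PowerSeries ℤ)
        + 2 * ∑ i ∈ Finset.range (r + 1),
            Zf (n - 1 + 2 ^ i) * ((Upoly : Polynomial ℤ) : PowerSeries ℤ)) := by
    rw [← Finset.sum_mul]; ring
  rw [hdist, hL1, Finset.sum_congr rfl hterm]
  -- now a pure identity, consequence of star
  have hstar : ((Qseg 0 r : Polynomial ℤ) : PowerSeries ℤ)
      = ((G r : Polynomial ℤ) : PowerSeries ℤ)
        + 2 * ∑ i ∈ Finset.range r,
            PowerSeries.X ^ (2 ^ i) * ((Qseg i r : Polynomial ℤ) : PowerSeries ℤ)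
        + 2 * PowerSeries.X ^ (2 ^ r) := by
    have h := congrArg (fun p : Polynomial ℤ => Polynomial.coeToPowerSeries.ringHom p) (star r)
    simp only [map_add, map_mul, map_pow, map_sum, map_ofNat,
      Polynomial.coeToPowerSeries.ringHom_apply, Polynomial.coe_X] at h
    exact h
  obtain ⟨a, ha⟩ : ∃ a, n = a + 1 := ⟨n - 1, by omega⟩
  rw [hstar, show n - 1 = a by omega, ha]
  rw [Finset.sum_range_succ, Qseg_self, Polynomial.coe_one, mul_one]
  have hs : ∑ i ∈ Finset.range r,
      PowerSeries.X ^ (a + 2 ^ i) * ((Qseg i r : Polynomial ℤ) : PowerSeries ℤ)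
      = PowerSeries.X ^ a * ∑ i ∈ Finset.range r,
          PowerSeries.X ^ (2 ^ i) * ((Qseg i r : Polynomial ℤ) : PowerSeries ℤ) := by
    rw [Finset.mul_sum]
    exact Finset.sum_congr rfl fun i _ => by rw [pow_add]; ring
  rw [hs, show (PowerSeries.X : PowerSeries ℤ) ^ (a + 2 ^ r)
      = PowerSeries.X ^ a * PowerSeries.X ^ (2 ^ r) from pow_add _ _ _]
  ring

lemma decomp : ∀ n : ℕ, n ≠ 0 → ∃ r q, n = 2 ^ (r + 1) * q + 2 ^ r := by
  intro n
  induction n using Nat.strong_induction_on with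
  | _ n ih =>
      intro hn
      rcases Nat.even_or_odd n with ⟨m, hm⟩ | ⟨m, hm⟩
      · obtain ⟨r, q, hrq⟩ := ih m (by omega) (by omega)
        refine ⟨r + 1, q, ?_⟩
        have : n = 2 * m := by omega
        rw [this, hrq]; ring
      · exact ⟨0, m, by omega⟩

lemma fact2 (r q : ℕ) : (2 ^ (r + 1) * q + 2 ^ r).factorization 2 = r := by
  have h : 2 ^ (r + 1) * q + 2 ^ r = 2 ^ r * (2 * q + 1) := by ring
  rw [h, Nat.factorization_mul (by positivity) (by omega)]
  simp [Nat.Prime.factorization_pow Nat.prime_two,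
    Nat.factorization_eq_zero_of_not_dvd (by omega : ¬ 2 ∣ 2 * q + 1)]

noncomputable def Y (n : ℕ) : PowerSeries ℤ := PowerSeries.mk fun k => (xfun n k : ℤ)

lemma coeff_two_mul (k : ℕ) (f : PowerSeries ℤ) :
    PowerSeries.coeff k (2 * f) = 2 * PowerSeries.coeff k f := by
  rw [show (2 : PowerSeries ℤ) = PowerSeries.C 2 by simp, PowerSeries.coeff_C_mul]

lemma Y_zero : Y 0 = 1 := by
  ext k
  cases k with
  | zero => simp [Y, xfun]
  | succ k => simp [Y, xfun, PowerSeries.coeff_one]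

lemma Y_rec (r q : ℕ) :
    Y (2 ^ (r + 1) * q + 2 ^ r) = PowerSeries.X * (Y (2 ^ (r + 1) * q + 2 ^ r - 1)
      + 2 * ∑ i ∈ Finset.range (r + 1), Y (2 ^ (r + 1) * q + 2 ^ r - 1 + 2 ^ i)) := by
  have hr : (0:ℕ) < 2 ^ r := Nat.pow_pos (by norm_num)
  obtain ⟨m, hm⟩ : ∃ m, 2 ^ (r + 1) * q + 2 ^ r = m + 1 := ⟨2 ^ (r + 1) * q + 2 ^ r - 1, by omega⟩
  have hf : (m + 1).factorization 2 = r := by rw [← hm]; exact fact2 r q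
  rw [hm, show m + 1 - 1 = m from rfl]
  ext k
  cases k with
  | zero =>
      rw [PowerSeries.coeff_zero_X_mul]
      simp [Y, xfun]
  | succ k =>
      rw [PowerSeries.coeff_succ_X_mul, map_add, coeff_two_mul, map_sum]
      simp only [Y, PowerSeries.coeff_mk]
      rw [show xfun (m + 1) (k + 1) = xfun m k
        + 2 * ∑ i ∈ Finset.range ((m + 1).factorization 2 + 1), xfun (m + 2 ^ i) k from rfl, hf]
      push_cast
      ring

lemma Zf_zero : Zf 0 = 1 := by
  have h := Pinv 0
  rw [P_zero, Polynomial.coe_one, one_mul] at h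
  rw [Zf, P_zero, Polynomial.coe_one, pow_zero, one_mul, h]

lemma YeqZ : ∀ k n, PowerSeries.coeff k (Y n) = PowerSeries.coeff k (Zf n) := by
  intro k
  induction k with
  | zero =>
      intro n
      rcases Nat.eq_zero_or_pos n with h | h
      · rw [h, Y_zero, Zf_zero]
      · obtain ⟨r, q, hrq⟩ := decomp n (by omega)
        rw [hrq, Y_rec, Zf_rec, PowerSeries.coeff_zero_X_mul, PowerSeries.coeff_zero_X_mul]
  | succ k ih =>
      intro n
      rcases Nat.eq_zero_or_pos n with h | h
      · rw [h, Y_zero, Zf_zero]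
      · obtain ⟨r, q, hrq⟩ := decomp n (by omega)
        rw [hrq, Y_rec, Zf_rec, PowerSeries.coeff_succ_X_mul, PowerSeries.coeff_succ_X_mul,
          map_add, map_add, coeff_two_mul, coeff_two_mul, map_sum, map_sum, ih]
        congr 2
        exact Finset.sum_congr rfl fun i _ => ih _


theorem generating_function_eq (s : ℕ) :
    PowerSeries.mk (fun k => (xfun (2 ^ s) k : ℤ)) * (G s : PowerSeries ℤ) =
      PowerSeries.X ^ 2 ^ s := by
  have hY : PowerSeries.mk (fun k => (xfun (2 ^ s) k : ℤ)) = Zf (2 ^ s) := by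
    ext k
    exact YeqZ k (2 ^ s)
  have hP : P 0 (2 ^ s) = G s := by
    have h := P_A s 0 0
    simpa [P_zero] using h
  have hinv := Pinv (2 ^ s)
  rw [hP] at hinv
  rw [hY, Zf, hP, mul_assoc, mul_comm _ ((G s : Polynomial ℤ) : PowerSeries ℤ), hinv, mul_one]
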